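/- (Proposition 1, single-RRH form.) Let J be a nonempty finite index set and let a > 0, W > 0, and r_j > 0, c_j > 0 for each j ∈ J. Let p̂ > 0 be the unique power with x(p̂) = 1, where x(p) = Σ_{j∈J} r_j/(W·log₂(1 + c_j·p)). Then for every p > 0 with x(p) ≤ 1 one has a·p·x(p) ≥ a·p̂·x(p̂), with equality if and only if p = p̂. In other words, when only wireless transmission power is considered, the minimum power subject to the load constraint x(p) ≤ 1 is attained exactly at full load x(p) = 1. -/

import Mathlib

open Real

-- key concavity inequality: for 0 < q < p, q·log(1+cp) < p·log(1+cq)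
lemma key_log (c q p : ℝ) (hc : 0 < c) (hq : 0 < q) (hqp : q < p) :
    q * Real.log (1 + c * p) < p * Real.log (1 + c * q) := by
  have hp : 0 < p := hq.trans hqp
  have ht0 : 0 < q / p := div_pos hq hp
  have ht1 : q / p < 1 := (div_lt_one hp).2 hqp
  have h1 : (1 : ℝ) ∈ Set.Ioi (0:ℝ) := by norm_num
  have h2 : (1 + c * p) ∈ Set.Ioi (0:ℝ) := by
    simp only [Set.mem_Ioi]; positivity
  have hne : (1 : ℝ) ≠ 1 + c * p := by nlinarith
  have hconc := strictConcaveOn_log_Ioi.2 h1 h2 hne (sub_pos.2 ht1) ht0 (by ring)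
  have heq : (1 - q / p) • (1:ℝ) + (q / p) • (1 + c * p) = 1 + c * q := by
    field_simp
    linear_combination (q * c + 1) * mul_inv_cancel₀ hp.ne'
  rw [heq] at hconc
  simp only [smul_eq_mul, Real.log_one, mul_zero, zero_add] at hconc
  have := (mul_lt_mul_iff_right₀ hp).2 hconc
  calc q * Real.log (1 + c * p) = p * (q / p * Real.log (1 + c * p)) := by
        field_simp
    _ < p * Real.log (1 + c * q) := this

theorem stmt_9 {J : Type*} [Fintype J] [Nonempty J]
    (a W : ℝ) (r c : J → ℝ)
    (ha : 0 < a) (hW : 0 < W)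
    (hr : ∀ j, 0 < r j) (hc : ∀ j, 0 < c j)
    (phat : ℝ) (hphat : 0 < phat)
    (hfull : (∑ j, r j / (W * Real.logb 2 (1 + c j * phat))) = 1) :
    ∀ p : ℝ, 0 < p → (∑ j, r j / (W * Real.logb 2 (1 + c j * p))) ≤ 1 →
      (a * phat * ∑ j, r j / (W * Real.logb 2 (1 + c j * phat))) ≤
        (a * p * ∑ j, r j / (W * Real.logb 2 (1 + c j * p))) ∧
      ((a * p * ∑ j, r j / (W * Real.logb 2 (1 + c j * p))) =
          (a * phat * ∑ j, r j / (W * Real.logb 2 (1 + c j * phat))) ↔ p = phat) := by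
  intro p hp hle
  have hlogb : ∀ (q : ℝ), 0 < q → ∀ j, 0 < Real.logb 2 (1 + c j * q) := by
    intro q hq j
    apply Real.logb_pos one_lt_two
    nlinarith [(hc j)]
  -- x is strictly antitone: q < p' → x p' < x q
  have hanti : ∀ q p' : ℝ, 0 < q → q < p' →
      (∑ j, r j / (W * Real.logb 2 (1 + c j * p'))) <
      (∑ j, r j / (W * Real.logb 2 (1 + c j * q))) := by
    intro q p' hq hqp
    apply Finset.sum_lt_sum_of_nonempty Finset.univ_nonempty
    intro j _
    apply div_lt_div_of_pos_left (hr j) (mul_pos hW (hlogb q hq j))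
    have : Real.logb 2 (1 + c j * q) < Real.logb 2 (1 + c j * p') := by
      apply Real.logb_lt_logb one_lt_two (by nlinarith [hc j])
      nlinarith [hc j]
    nlinarith [hlogb q hq j]
  -- p ≥ phat
  have hge : phat ≤ p := by
    by_contra h
    push_neg at h
    have := hanti p phat hp h
    rw [hfull] at this
    linarith
  -- p·x(p) strictly increasing: q < p' → q·x(q) < p'·x(p')
  have hmono : ∀ q p' : ℝ, 0 < q → q < p' →
      (a * q * ∑ j, r j / (W * Real.logb 2 (1 + c j * q))) <
      (a * p' * ∑ j, r j / (W * Real.logb 2 (1 + c j * p'))) := by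
    intro q p' hq hqp
    have hp' : 0 < p' := hq.trans hqp
    rw [Finset.mul_sum, Finset.mul_sum]
    apply Finset.sum_lt_sum_of_nonempty Finset.univ_nonempty
    intro j _
    have L1 := hlogb q hq j
    have L2 := hlogb p' hp' j
    rw [mul_div_assoc', mul_div_assoc', div_lt_div_iff₀ (by positivity) (by positivity)]
    have hkey := key_log (c j) q p' (hc j) hq hqp
    have hlog2 : 0 < Real.log 2 := Real.log_pos one_lt_two
    have e1 : Real.logb 2 (1 + c j * q) = Real.log (1 + c j * q) / Real.log 2 := rfl
    have e2 : Real.logb 2 (1 + c j * p') = Real.log (1 + c j * p') / Real.log 2 := rfl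
    rw [e1, e2]
    have hpos : 0 < a * r j * (W / Real.log 2) := mul_pos (mul_pos ha (hr j)) (div_pos hW hlog2)
    have g1 : a * q * r j * (W * (Real.log (1 + c j * p') / Real.log 2)) =
        (a * r j * (W / Real.log 2)) * (q * Real.log (1 + c j * p')) := by ring
    have g2 : a * p' * r j * (W * (Real.log (1 + c j * q) / Real.log 2)) =
        (a * r j * (W / Real.log 2)) * (p' * Real.log (1 + c j * q)) := by ring
    rw [g1, g2]
    exact mul_lt_mul_of_pos_left hkey hpos
  rcases eq_or_lt_of_le hge with heq | hlt
  · subst heq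
    exact ⟨le_refl _, by simp⟩
  · have h := hmono phat p hphat hlt
    constructor
    · linarith
    · constructor
      · intro heq; linarith
      · intro heq; exact absurd heq (ne_of_gt hlt)
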